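/- If G possesses a homogeneous cycle C = (e_1,...,e_l) with vertices i_1,...,i_l such that μ_C(i_a) - μ_C(i_b) ≤ dist_G(i_a, i_b) for all 1 ≤ a,b ≤ l, then the polytope P_G is not simplicial: it has a face containing the l affinely dependent points ρ(e_1),...,ρ(e_l). -/

import Mathlib

open Finset

/-- `ρ(e) = e_{i} - e_{j}` for an arrow `e = (i,j)`. -/
def rho {V : Type*} [DecidableEq V] (e : V × V) : V → ℝ :=
  fun k => (if k = e.1 then (1 : ℝ) else 0) - (if k = e.2 then (1 : ℝ) else 0)

/-- The polytope `P_G` associated with the arrow set `A` of a directed graph. -/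
def polyG {V : Type*} [DecidableEq V] (A : Finset (V × V)) : Set (V → ℝ) :=
  convexHull ℝ (rho '' (A : Set (V × V)))

/-- Connectivity of the underlying undirected graph of the directed graph with arrow set `A`. -/
def GConnected {V : Type*} [DecidableEq V] (A : Finset (V × V)) : Prop :=
  (SimpleGraph.fromRel (fun i j => (i, j) ∈ A)).Connected

/-- Cyclic successor on `Fin l`. -/
def succAt {l : ℕ} (h : 0 < l) (j : Fin l) : Fin l :=
  ⟨((j : ℕ) + 1) % l, Nat.mod_lt _ h⟩

/-- The data of a cycle in a directed graph on the vertex set `V`: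
a list of at least two distinct vertices, cyclically ordered, together with, for each
edge of the cycle, a choice of direction (`ε j = true` means the arrow points forwards). -/
structure PreCycle (V : Type*) where
  l : ℕ
  two_le : 2 ≤ l
  v : Fin l → V
  ε : Fin l → Bool
  inj : Function.Injective v

namespace PreCycle

variable {V : Type*}

theorem pos (C : PreCycle V) : 0 < C.l :=
  lt_of_lt_of_le Nat.zero_lt_two C.two_le

/-- The cyclically next index. -/
def nxt (C : PreCycle V) (j : Fin C.l) : Fin C.l := succAt C.pos j

/-- The arrow of the cycle corresponding to its `j`-th edge. -/
def arrow (C : PreCycle V) (j : Fin C.l) : V × V :=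
  if C.ε j then (C.v j, C.v (C.nxt j)) else (C.v (C.nxt j), C.v j)

/-- `C` is a cycle in the directed graph with arrow set `A`. -/
def IsCycleIn [DecidableEq V] (C : PreCycle V) (A : Finset (V × V)) : Prop :=
  (∀ j, C.arrow j ∈ A) ∧ Function.Injective C.arrow

/-- A cycle is homogeneous if it has as many forward arrows as backward arrows. -/
def Homogeneous (C : PreCycle V) : Prop :=
  2 * (Finset.univ.filter fun j => C.ε j = true).card = C.l

/-- A directed cycle: all arrows point in the direction of traversal. -/
def IsDirected (C : PreCycle V) : Prop := ∀ j, C.ε j = true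

/-- The defining property of the function `μ_C` attached to a homogeneous cycle `C`
(here recorded as a function of the position along the cycle; since the vertices of the
cycle are distinct this is the same as a function on the cycle vertices):
it is nonnegative, decreases by `1` along forward arrows, increases by `1` along
backward arrows, and has minimum value `0`. -/
def IsMu (C : PreCycle V) (μ : Fin C.l → ℤ) : Prop :=
  (∀ j, 0 ≤ μ j) ∧ (∀ j, μ (C.nxt j) = if C.ε j then μ j - 1 else μ j + 1) ∧ (∃ j, μ j = 0)

end PreCycle

/-- Every arrow of the directed graph with arrow set `A` lies in a directed cycle. -/
def EveryArrowInDirCycle {V : Type*} [DecidableEq V] (A : Finset (V × V)) : Prop :=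
  ∀ e ∈ A, ∃ C : PreCycle V, C.IsCycleIn A ∧ C.IsDirected ∧ ∃ j, C.arrow j = e

/-- The dimension of a subset of `ℝ^V` (the dimension of its affine hull). -/
noncomputable def pdim {V : Type*} (s : Set (V → ℝ)) : ℕ :=
  Module.finrank ℝ (vectorSpan ℝ s)

/-- `F` is a facet of the polytope `P`: a nonempty exposed face of codimension one. -/
def IsFacetOf {V : Type*} (F P : Set (V → ℝ)) : Prop :=
  IsExposed ℝ P F ∧ F.Nonempty ∧ pdim F + 1 = pdim P

/-- A polytope is simplicial if the vertices of every facet are affinely independent. -/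
def Simplicial {V : Type*} (P : Set (V → ℝ)) : Prop :=
  ∀ F : Set (V → ℝ), IsFacetOf F P →
    AffineIndependent ℝ (fun x : (F.extremePoints ℝ) => (x : V → ℝ))

/-- The lattice `ℤ^V ∩ {x : Σ x_i = 0}`, as a subset of `ℝ^V`. -/
def latticeSet (V : Type*) [Fintype V] : Set (V → ℝ) :=
  {x | (∀ i, ∃ z : ℤ, x i = (z : ℝ)) ∧ ∑ i, x i = 0}

/-- The set of integer points of `ℝ^V`. -/
def intLat (V : Type*) : Set (V → ℝ) :=
  {x | ∀ i, ∃ z : ℤ, x i = (z : ℝ)}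

/-- `W` is a `ℤ`-basis of (the additive group generated by) `L`. -/
def IsZBasisOf {V : Type*} (W L : Set (V → ℝ)) : Prop :=
  W ⊆ L ∧ LinearIndependent ℤ (fun x : W => (x : V → ℝ)) ∧
    L ⊆ (Submodule.span ℤ W : Set (V → ℝ))

/-- There is a directed path of length `n` from `i` to `j` in the directed graph `A`. -/
def HasDPath {V : Type*} (A : Finset (V × V)) (i j : V) (n : ℕ) : Prop :=
  ∃ f : Fin (n + 1) → V, f 0 = i ∧ f (Fin.last n) = j ∧
    ∀ k : Fin n, (f k.castSucc, f k.succ) ∈ A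

/-- The underlying undirected graph of `A` contains an even cycle. -/
def HasEvenCycle {V : Type*} [DecidableEq V] (A : Finset (V × V)) : Prop :=
  ∃ C : PreCycle V, 3 ≤ C.l ∧ Even C.l ∧
    ∀ j, (C.v j, C.v (C.nxt j)) ∈ A ∨ (C.v (C.nxt j), C.v j) ∈ A

theorem succAt_bij {l : ℕ} (h : 0 < l) : Function.Bijective (succAt h) := by
  haveI : NeZero l := ⟨h.ne'⟩
  have e : succAt h = fun j => j + 1 := by
    funext j; apply Fin.ext
    simp [succAt, Fin.add_def, Fin.val_one']
  rw [e]; exact (Equiv.addRight 1).bijective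

section Aux
variable {V : Type*} [DecidableEq V] (A : Finset (V × V))

def Reach (i j : V) : Prop := Relation.ReflTransGen (fun x y => (x,y) ∈ A) i j

lemma hasDPath_refl (i : V) : HasDPath A i i 0 := ⟨fun _ => i, rfl, rfl, fun k => k.elim0⟩

lemma hasDPath_head {i j k : V} {n : ℕ} (hij : (i,j) ∈ A) (hp : HasDPath A j k n) :
    HasDPath A i k (n+1) := by
  obtain ⟨f, hf0, hfl, hfa⟩ := hp
  refine ⟨Fin.cases i f, by simp, ?_, ?_⟩
  · rw [← Fin.succ_last]; simp only [Fin.cases_succ]; exact hfl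
  · intro m
    induction m using Fin.cases with
    | zero =>
        have h1 : (0 : Fin (n+1)).castSucc = 0 := rfl
        have h2 : (0 : Fin (n+1)).succ = (0 : Fin (n+1)).succ := rfl
        simp only [h1, Fin.cases_zero]
        show (i, Fin.cases i f (0 : Fin (n+1)).succ) ∈ A
        simp only [Fin.cases_succ, hf0]
        exact hij
    | succ p =>
        show (Fin.cases i f (p.succ.castSucc), Fin.cases i f (p.succ.succ)) ∈ A
        rw [← Fin.succ_castSucc]
        simp only [Fin.cases_succ]
        exact hfa p

lemma reach_hasDPath {i j : V} (hr : Reach A i j) : ∃ n, HasDPath A i j n := by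
  induction hr using Relation.ReflTransGen.head_induction_on with
  | refl => exact ⟨0, hasDPath_refl A j⟩
  | head hac _ ih => obtain ⟨n, hp⟩ := ih; exact ⟨n+1, hasDPath_head A hac hp⟩

-- walking around a directed cycle
lemma dirCycle_back (C : PreCycle V) (hC : ∀ j, C.arrow j ∈ A) (hdir : C.IsDirected)
    (j0 : Fin C.l) : Reach A (C.v (C.nxt j0)) (C.v j0) := by
  have harr : ∀ j : Fin C.l, (C.v j, C.v (C.nxt j)) ∈ A := by
    intro j; have := hC j; rwa [PreCycle.arrow, hdir j, if_pos rfl] at this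
  have key : ∀ m : ℕ, Reach A (C.v (C.nxt j0)) (C.v ⟨((j0:ℕ) + 1 + m) % C.l, Nat.mod_lt _ C.pos⟩) := by
    intro m
    induction m with
    | zero => exact Relation.ReflTransGen.refl
    | succ p ih =>
        refine ih.tail ?_
        have : (⟨((j0:ℕ) + 1 + (p+1)) % C.l, Nat.mod_lt _ C.pos⟩ : Fin C.l)
            = C.nxt ⟨((j0:ℕ) + 1 + p) % C.l, Nat.mod_lt _ C.pos⟩ := by
          apply Fin.ext
          show ((j0:ℕ) + 1 + (p+1)) % C.l = (((j0:ℕ) + 1 + p) % C.l + 1) % C.l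
          rw [Nat.mod_add_mod]
          rfl
        rw [this]
        exact harr _
  have hlast := key (C.l - 1)
  have : ((j0:ℕ) + 1 + (C.l - 1)) % C.l = (j0:ℕ) := by
    have h1 : (j0:ℕ) + 1 + (C.l - 1) = (j0:ℕ) + C.l := by
      have := C.pos; omega
    rw [h1, Nat.add_mod_right, Nat.mod_eq_of_lt j0.isLt]
  rwa [show (⟨((j0:ℕ) + 1 + (C.l - 1)) % C.l, Nat.mod_lt _ C.pos⟩ : Fin C.l) = j0 from Fin.ext this] at hlast

end Aux

section Aux2
variable {V : Type*} [DecidableEq V] (A : Finset (V × V))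

lemma nxt_ne {C : PreCycle V} (j : Fin C.l) : C.nxt j ≠ j := by
  intro heq
  have hv := congrArg Fin.val heq
  have h2 := C.two_le
  have hlt := j.isLt
  simp only [PreCycle.nxt, succAt] at hv
  rcases Nat.lt_or_ge ((j:ℕ)+1) C.l with h1 | h1
  · rw [Nat.mod_eq_of_lt h1] at hv; omega
  · have : (j:ℕ)+1 = C.l := by omega
    rw [this, Nat.mod_self] at hv; omega

lemma arrow_fst_ne_snd (h : EveryArrowInDirCycle A) {e : V × V} (he : e ∈ A) : e.1 ≠ e.2 := by
  obtain ⟨C, hC, hdir, j0, hj0⟩ := h _ he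
  rw [PreCycle.arrow, if_pos (hdir j0)] at hj0
  rw [← hj0]
  simp only [ne_eq]
  intro hvv
  exact nxt_ne j0 (C.inj hvv.symm)

lemma arrow_back (h : EveryArrowInDirCycle A) {i j : V} (hij : (i,j) ∈ A) : Reach A j i := by
  obtain ⟨C, hC, hdir, j0, hj0⟩ := h _ hij
  rw [PreCycle.arrow, if_pos (hdir j0)] at hj0
  have hb := dirCycle_back A C hC.1 hdir j0
  have h1 : C.v j0 = i := congrArg Prod.fst hj0
  have h2 : C.v (C.nxt j0) = j := congrArg Prod.snd hj0
  rwa [h1, h2] at hb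

lemma scc (hconn : GConnected A) (h : EveryArrowInDirCycle A) (i j : V) : Reach A i j := by
  obtain ⟨w⟩ := hconn.preconnected i j
  induction w with
  | nil => exact Relation.ReflTransGen.refl
  | cons hadj p ih =>
      rw [SimpleGraph.fromRel_adj] at hadj
      rcases hadj.2 with hmem | hmem
      · exact Relation.ReflTransGen.head hmem ih
      · exact Relation.ReflTransGen.trans (arrow_back A h hmem) ih

lemma sum_delta (C : PreCycle V) (g : V → ℝ) :
    ∑ j, (g (C.v j) - g (C.v (C.nxt j))) = 0 := by
  have hb := Function.Bijective.sum_comp (succAt_bij C.pos) (fun j => g (C.v j))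
  rw [Finset.sum_sub_distrib]
  have h2 : ∑ x, g (C.v (C.nxt x)) = ∑ i, g (C.v i) := hb
  rw [h2, sub_self]

lemma not_affInd (C : PreCycle V) (hhom : C.Homogeneous) :
    ¬ AffineIndependent ℝ (fun j : Fin C.l => rho (C.arrow j)) := by
  intro hAI
  rw [affineIndependent_iff] at hAI
  set cw : Fin C.l → ℝ := fun j => if C.ε j then 1 else -1 with hcw
  have h1 : ∑ j, cw j = 0 := by
    rw [Finset.sum_ite (f := fun _ => (1:ℝ)) (g := fun _ => (-1:ℝ))]
    simp only [Finset.sum_const, nsmul_eq_mul, mul_one, mul_neg_one]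
    have hcard := Finset.card_filter_add_card_filter_not
      (s := (Finset.univ : Finset (Fin C.l))) (p := fun j => C.ε j = true)
    have hh := hhom
    unfold PreCycle.Homogeneous at hh
    have hc : (Finset.univ : Finset (Fin C.l)).card = C.l := by simp
    have hab : (Finset.univ.filter fun j => C.ε j = true).card
        = (Finset.univ.filter fun j => ¬ (C.ε j = true)).card := by omega
    rw [hab]
    simp
  have h2 : ∑ j, cw j • rho (C.arrow j) = 0 := by
    have hterm : ∀ j, cw j • rho (C.arrow j)
        = (fun k => (if k = C.v j then (1:ℝ) else 0) - (if k = C.v (C.nxt j) then 1 else 0)) := by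
      intro j
      funext k
      by_cases hj : C.ε j <;> simp [hcw, hj, rho, PreCycle.arrow] <;> ring
    simp only [hterm]
    funext k
    rw [Finset.sum_apply]
    exact sum_delta C (fun i => (if k = i then (1:ℝ) else 0))
  have := hAI Finset.univ cw h1 h2 ⟨0, C.pos⟩ (Finset.mem_univ _)
  by_cases hj : C.ε ⟨0, C.pos⟩ <;> simp [hcw, hj] at this

section W
variable {d : ℕ} (A : Finset (Fin d × Fin d)) (C : PreCycle (Fin d))

lemma exists_w0 (hconn : GConnected A) (h : EveryArrowInDirCycle A)
    (μ : Fin C.l → ℤ) (hμ : C.IsMu μ)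
    (hineq : ∀ a b : Fin C.l, ∀ n : ℕ, HasDPath A (C.v a) (C.v b) n → μ a - μ b ≤ (n : ℤ)) :
    ∃ w : Fin d → ℤ, (∀ e ∈ A, w e.1 - w e.2 ≤ 1) ∧
      (∀ j, w ((C.arrow j).1) - w ((C.arrow j).2) = 1) := by
  classical
  have hne : ∀ i : Fin d, ∃ m : ℕ, ∃ (a : Fin C.l) (n : ℕ),
      HasDPath A i (C.v a) n ∧ m = (μ a).toNat + n := by
    intro i
    obtain ⟨n, hp⟩ := reach_hasDPath A (scc A hconn h i (C.v ⟨0, C.pos⟩))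
    exact ⟨(μ ⟨0, C.pos⟩).toNat + n, ⟨0, C.pos⟩, n, hp, rfl⟩
  set w : Fin d → ℤ := fun i => (Nat.find (hne i) : ℤ) with hwdef
  have hwle : ∀ (a : Fin C.l) (n : ℕ) (i : Fin d), HasDPath A i (C.v a) n → w i ≤ μ a + n := by
    intro a n i hp
    have h1 : Nat.find (hne i) ≤ (μ a).toNat + n := Nat.find_le ⟨a, n, hp, rfl⟩
    have h2 := Int.toNat_of_nonneg (hμ.1 a)
    have h3 := (Int.ofNat_le.mpr h1)
    push_cast at h3
    show (Nat.find (hne i) : ℤ) ≤ μ a + n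
    omega
  have hwge : ∀ i : Fin d, ∃ (a : Fin C.l) (n : ℕ), HasDPath A i (C.v a) n ∧ w i = μ a + n := by
    intro i
    obtain ⟨a, n, hp, heq⟩ := Nat.find_spec (hne i)
    refine ⟨a, n, hp, ?_⟩
    have h2 := Int.toNat_of_nonneg (hμ.1 a)
    show (Nat.find (hne i) : ℤ) = μ a + n
    omega
  have hcyc : ∀ a : Fin C.l, w (C.v a) = μ a := by
    intro a
    have hle := hwle a 0 (C.v a) (hasDPath_refl A _)
    obtain ⟨a', n, hp, heq⟩ := hwge (C.v a)
    have := hineq a a' n hp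
    omega
  have harr : ∀ e ∈ A, w e.1 - w e.2 ≤ 1 := by
    rintro ⟨i, j⟩ hij
    obtain ⟨a, n, hp, heq⟩ := hwge j
    have := hwle a (n+1) i (hasDPath_head A hij hp)
    push_cast at this
    simp only
    omega
  refine ⟨w, harr, ?_⟩
  intro j
  have hstep := hμ.2.1 j
  by_cases hj : C.ε j <;>
    simp only [PreCycle.arrow, hj, if_true, if_false, Bool.false_eq_true, hcyc] <;>
    rw [hstep] <;> simp [hj] <;> ring

end W

section Tight
variable {d : ℕ} (A : Finset (Fin d × Fin d))

def TStep (w : Fin d → ℤ) (i j : Fin d) : Prop :=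
  ((i,j) ∈ A ∧ w i - w j = 1) ∨ ((j,i) ∈ A ∧ w j - w i = 1)

def TReach (w : Fin d → ℤ) (i j : Fin d) : Prop :=
  Relation.ReflTransGen (TStep A w) i j

lemma tstep_symm (w : Fin d → ℤ) : Symmetric (TStep A w) := by
  intro x y hxy; rcases hxy with h | h
  · exact Or.inr h
  · exact Or.inl h

lemma treach_symm (w : Fin d → ℤ) {i j : Fin d} (hij : TReach A w i j) : TReach A w j i :=
  by
  haveI : Std.Symm (TStep A w) := ⟨fun a b hab => tstep_symm A w hab⟩
  exact Std.Symm.symm (r := Relation.ReflTransGen (TStep A w)) _ _ hij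

noncomputable def Tset (w : Fin d → ℤ) : Finset (Fin d × Fin d) := by
  classical exact A.filter (fun e => w e.1 - w e.2 = 1)

lemma cross_exists {S : Set (Fin d)} {x y : Fin d} (hr : Reach A x y)
    (hx : x ∈ S) (hy : y ∉ S) : ∃ e ∈ A, e.1 ∈ S ∧ e.2 ∉ S := by
  induction hr using Relation.ReflTransGen.head_induction_on with
  | refl => exact absurd hx hy
  | @head a c hac _ ih =>
      by_cases hc : c ∈ S
      · exact ih hc
      · exact ⟨(a, c), hac, hx, hc⟩

lemma improve (hconn : GConnected A) (h : EveryArrowInDirCycle A) (w : Fin d → ℤ)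
    (hw : ∀ e ∈ A, w e.1 - w e.2 ≤ 1) (hncon : ¬ ∀ i j, TReach A w i j) :
    ∃ w' : Fin d → ℤ, (∀ e ∈ A, w' e.1 - w' e.2 ≤ 1) ∧ Tset A w ⊂ Tset A w' := by
  classical
  push_neg at hncon
  obtain ⟨i1, j1, hnr⟩ := hncon
  set S : Set (Fin d) := {i | TReach A w i i1} with hS
  have hi1 : i1 ∈ S := Relation.ReflTransGen.refl
  have hj1 : j1 ∉ S := by
    intro hj
    exact hnr (Relation.ReflTransGen.trans (treach_symm A w hj) Relation.ReflTransGen.refl)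
  have hclosed : ∀ e ∈ Tset A w, (e.1 ∈ S ↔ e.2 ∈ S) := by
    intro e he
    rw [Tset, Finset.mem_filter] at he
    have hstep : TStep A w e.1 e.2 := Or.inl ⟨(by simpa using he.1), he.2⟩
    constructor
    · intro h1
      exact Relation.ReflTransGen.head (tstep_symm A w hstep) h1
    · intro h2
      exact Relation.ReflTransGen.head hstep h2
  have hcr : ∃ e ∈ A, e.1 ∈ S ∧ e.2 ∉ S := cross_exists A (scc A hconn h i1 j1) hi1 hj1
  set B := A.filter (fun e => e.1 ∈ S ∧ e.2 ∉ S) with hB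
  have hBne : B.Nonempty := by
    obtain ⟨e, he, h1, h2⟩ := hcr
    exact ⟨e, by simp [hB, he, h1, h2]⟩
  have hBprop : ∀ e ∈ B, e ∈ A ∧ e.1 ∈ S ∧ e.2 ∉ S := by
    intro e he; simpa [hB] using he
  set vals := B.image (fun e => w e.1 - w e.2) with hvals
  have hvne : vals.Nonempty := hBne.image _
  have hMmem := Finset.max'_mem vals hvne
  obtain ⟨estar, hestar, hMe⟩ := Finset.mem_image.mp hMmem
  have hBnotight : ∀ e ∈ B, w e.1 - w e.2 ≤ 0 := by
    intro e he
    obtain ⟨heA, h1, h2⟩ := hBprop e he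
    rcases eq_or_lt_of_le (hw e heA) with heq | hlt
    · exfalso
      have hmem : e ∈ Tset A w := by rw [Tset, Finset.mem_filter]; exact ⟨heA, heq⟩
      exact h2 ((hclosed e hmem).mp h1)
    · omega
  have hM0 : vals.max' hvne ≤ 0 := by rw [← hMe]; exact hBnotight _ hestar
  set t := 1 - vals.max' hvne with ht
  set w' := fun i => if i ∈ S then w i + t else w i with hw'def
  have hww' : ∀ i, w' i = if i ∈ S then w i + t else w i := fun i => rfl
  have hle' : ∀ e ∈ A, w' e.1 - w' e.2 ≤ 1 := by
    intro e he
    rw [hww', hww']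
    by_cases h1 : e.1 ∈ S <;> by_cases h2 : e.2 ∈ S <;>
      simp only [h1, h2, if_true, if_false]
    · have := hw e he; omega
    · have hmB : e ∈ B := by rw [hB, Finset.mem_filter]; exact ⟨he, h1, h2⟩
      have : w e.1 - w e.2 ≤ vals.max' hvne :=
        Finset.le_max' vals _ (by rw [hvals]; exact Finset.mem_image_of_mem _ hmB)
      omega
    · have := hw e he; omega
    · have := hw e he; omega
  have hsub : Tset A w ⊆ Tset A w' := by
    intro e he
    have heA : e ∈ A := (Finset.mem_filter.mp he).1
    have htight : w e.1 - w e.2 = 1 := (Finset.mem_filter.mp he).2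
    have hiff := hclosed e he
    rw [Tset, Finset.mem_filter]
    refine ⟨heA, ?_⟩
    rw [hww', hww']
    by_cases h1 : e.1 ∈ S
    · have h2 := hiff.mp h1
      simp only [h1, h2, if_true]; omega
    · have h2 : e.2 ∉ S := fun hc => h1 (hiff.mpr hc)
      simp only [h1, h2, if_false]; omega
  have hnew : estar ∈ Tset A w' ∧ estar ∉ Tset A w := by
    obtain ⟨heA, h1, h2⟩ := hBprop estar hestar
    constructor
    · rw [Tset, Finset.mem_filter]
      refine ⟨heA, ?_⟩
      rw [hww', hww']
      simp only [h1, h2, if_true, if_false]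
      omega
    · rw [Tset, Finset.mem_filter]
      rintro ⟨-, habs⟩
      have := hBnotight estar hestar
      omega
  exact ⟨w', hle', Finset.ssubset_iff_of_subset hsub |>.mpr ⟨estar, hnew.1, hnew.2⟩⟩

lemma exists_w_con (hconn : GConnected A) (h : EveryArrowInDirCycle A) (w0 : Fin d → ℤ)
    (hw0 : ∀ e ∈ A, w0 e.1 - w0 e.2 ≤ 1) :
    ∃ w : Fin d → ℤ, (∀ e ∈ A, w e.1 - w e.2 ≤ 1) ∧ Tset A w0 ⊆ Tset A w ∧
      ∀ i j, TReach A w i j := by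
  classical
  have key : ∀ k : ℕ, ∀ w : Fin d → ℤ, (∀ e ∈ A, w e.1 - w e.2 ≤ 1) →
      A.card - (Tset A w).card ≤ k →
      ∃ w' : Fin d → ℤ, (∀ e ∈ A, w' e.1 - w' e.2 ≤ 1) ∧ Tset A w ⊆ Tset A w' ∧
        ∀ i j, TReach A w' i j := by
    intro k
    induction k with
    | zero =>
        intro w hw hcard
        by_cases hcon : ∀ i j, TReach A w i j
        · exact ⟨w, hw, Finset.Subset.refl _, hcon⟩
        · exfalso
          obtain ⟨w', hw', hss⟩ := improve A hconn h w hw hcon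
          have h1 := Finset.card_lt_card hss
          have h2 : Tset A w' ⊆ A := Finset.filter_subset _ _
          have h3 := Finset.card_le_card h2
          omega
    | succ k ih =>
        intro w hw hcard
        by_cases hcon : ∀ i j, TReach A w i j
        · exact ⟨w, hw, Finset.Subset.refl _, hcon⟩
        · obtain ⟨w', hw', hss⟩ := improve A hconn h w hw hcon
          have h1 := Finset.card_lt_card hss
          have h2 : Tset A w' ⊆ A := Finset.filter_subset _ _
          have h3 := Finset.card_le_card h2
          obtain ⟨w'', hw'', hsub'', hcon''⟩ := ih w' hw' (by omega)
          exact ⟨w'', hw'', Finset.Subset.trans hss.subset hsub'', hcon''⟩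
  obtain ⟨w, hw, hsub, hcon⟩ := key (A.card - (Tset A w0).card) w0 hw0 le_rfl
  exact ⟨w, hw, hsub, hcon⟩

end Tight

section Geom
variable {d : ℕ}

noncomputable def lfun (w : Fin d → ℤ) : (Fin d → ℝ) →ₗ[ℝ] ℝ :=
  ∑ i, (w i : ℝ) • LinearMap.proj i

lemma lfun_apply (w : Fin d → ℤ) (x : Fin d → ℝ) : lfun w x = ∑ i, (w i : ℝ) * x i := by
  simp [lfun, LinearMap.sum_apply, LinearMap.smul_apply, LinearMap.proj_apply]

lemma lfun_rho (w : Fin d → ℤ) (e : Fin d × Fin d) :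
    lfun w (rho e) = (w e.1 : ℝ) - (w e.2 : ℝ) := by
  rw [lfun_apply]
  simp only [rho, mul_sub]
  rw [Finset.sum_sub_distrib]
  congr 1 <;> simp [mul_ite, Finset.sum_ite_eq']

lemma poly_eq_hull (A : Finset (Fin d × Fin d)) :
    polyG A = convexHull ℝ ((A.image rho : Finset (Fin d → ℝ)) : Set (Fin d → ℝ)) := by
  rw [polyG, Finset.coe_image]

lemma hull_le {s : Finset (Fin d → ℝ)} {g : (Fin d → ℝ) →ₗ[ℝ] ℝ} {c : ℝ}
    (hb : ∀ y ∈ s, g y ≤ c) {x : Fin d → ℝ} (hx : x ∈ convexHull ℝ (s : Set (Fin d → ℝ))) :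
    g x ≤ c := by
  have := convexHull_min (show (s : Set (Fin d → ℝ)) ⊆ {z | g z ≤ c} by
    intro y hy; exact hb y (by exact_mod_cast hy)) (convex_halfSpace_le g.isLinear c)
  exact this hx

lemma hull_concentrate {s : Finset (Fin d → ℝ)} {g : (Fin d → ℝ) →ₗ[ℝ] ℝ} {c : ℝ}
    (hb : ∀ y ∈ s, g y ≤ c) {x : Fin d → ℝ} (hx : x ∈ convexHull ℝ (s : Set (Fin d → ℝ)))
    (hxc : g x = c) :
    x ∈ convexHull ℝ ((s.filter (fun y => g y = c) : Finset (Fin d → ℝ)) : Set (Fin d → ℝ)) := by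
  classical
  obtain ⟨wt, hw0, hw1, hcm⟩ := Finset.mem_convexHull.mp hx
  rw [Finset.centerMass_eq_of_sum_1 _ _ hw1] at hcm
  simp only [id] at hcm
  have hgx : ∑ y ∈ s, wt y * g y = c := by
    rw [← hxc, ← hcm, map_sum]
    simp [smul_eq_mul]
  have hzero : ∀ y ∈ s, wt y * (c - g y) = 0 := by
    have hsum : ∑ y ∈ s, wt y * (c - g y) = 0 := by
      have h1 : ∑ y ∈ s, wt y * (c - g y) = ∑ y ∈ s, (wt y * c - wt y * g y) :=
        Finset.sum_congr rfl (fun y _ => by ring)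
      rw [h1, Finset.sum_sub_distrib, ← Finset.sum_mul, hw1, hgx, one_mul, sub_self]
    exact fun y hy =>
      (Finset.sum_eq_zero_iff_of_nonneg
        (fun z hz => by nlinarith [hw0 z hz, hb z hz])).mp hsum y hy
  have hvanish : ∀ y ∈ s, g y ≠ c → wt y = 0 := by
    intro y hy hne
    have := hzero y hy
    rcases mul_eq_zero.mp this with h | h
    · exact h
    · exfalso; apply hne; linarith [h]
  rw [Finset.mem_convexHull]
  refine ⟨wt, ?_, ?_, ?_⟩
  · intro y hy; exact hw0 y (Finset.mem_of_mem_filter y hy)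
  · rw [Finset.sum_filter_of_ne (fun y hy hne => ?_)]
    · exact hw1
    · by_contra hgy
      exact hne (hvanish y hy hgy)
  · rw [Finset.centerMass_eq_of_sum_1]
    · simp only [id]
      rw [← hcm]
      refine (Finset.sum_subset (f := fun y => wt y • y) (Finset.filter_subset (fun y => g y = c) s) ?_)
      intro y hy hny
      have : g y ≠ c := by
        intro hc; exact hny (Finset.mem_filter.mpr ⟨hy, hc⟩)
      show wt y • y = 0
      rw [hvanish y hy this, zero_smul]
    · rw [Finset.sum_filter_of_ne (fun y hy hne => ?_)]
      · exact hw1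
      · by_contra hgy
        exact hne (hvanish y hy hgy)

end Geom

section Geom2
variable {d : ℕ} (A : Finset (Fin d × Fin d))

lemma rho_mem_polyG {e : Fin d × Fin d} (he : e ∈ A) : rho e ∈ polyG A :=
  subset_convexHull ℝ _ ⟨e, he, rfl⟩

lemma sum_rho_dir (C : PreCycle (Fin d)) (hdir : C.IsDirected) :
    ∑ j, rho (C.arrow j) = 0 := by
  funext k
  rw [Finset.sum_apply]
  have : ∀ j : Fin C.l, rho (C.arrow j) k
      = (fun i => if k = i then (1:ℝ) else 0) (C.v j)
        - (fun i => if k = i then (1:ℝ) else 0) (C.v (C.nxt j)) := by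
    intro j
    rw [PreCycle.arrow, if_pos (hdir j), rho]
  rw [Finset.sum_congr rfl (fun j _ => this j)]
  show _ = (0:ℝ)
  exact sum_delta C (fun i => if k = i then (1:ℝ) else 0)

lemma zero_mem_polyG (h : EveryArrowInDirCycle A) {e : Fin d × Fin d} (he : e ∈ A) :
    0 ∈ polyG A := by
  obtain ⟨C, hC, hdir, -⟩ := h e he
  have hl : (0:ℝ) < (C.l : ℝ) := by exact_mod_cast C.pos
  have hcm : (Finset.univ : Finset (Fin C.l)).centerMass (fun _ => (C.l : ℝ)⁻¹)
      (fun j => rho (C.arrow j)) = 0 := by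
    rw [Finset.centerMass_eq_of_sum_1]
    · rw [← Finset.smul_sum, sum_rho_dir C hdir, smul_zero]
    · rw [Finset.sum_const, Finset.card_univ, Fintype.card_fin, nsmul_eq_mul]
      field_simp
  rw [← hcm]
  exact Finset.centerMass_mem_convexHull _ (fun i _ => by positivity)
    (by rw [Finset.sum_const, Finset.card_univ, Fintype.card_fin, nsmul_eq_mul]; positivity)
    (fun j _ => ⟨C.arrow j, hC.1 j, rfl⟩)

-- the exposing functional for a single vertex rho e
lemma rho_extreme (h : EveryArrowInDirCycle A) {e : Fin d × Fin d} (he : e ∈ A) :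
    rho e ∈ Set.extremePoints ℝ (polyG A) := by
  classical
  set we : Fin d → ℤ := fun i => if i = e.1 then 1 else if i = e.2 then -1 else 0 with hwe
  have hee := arrow_fst_ne_snd A h he
  have hval2 : lfun we (rho e) = 2 := by
    rw [lfun_rho]
    simp [hwe, Ne.symm hee]
    norm_num
  have hbound : ∀ y ∈ A.image rho, lfun we y ≤ 2 := by
    intro y hy
    obtain ⟨e', he', rfl⟩ := Finset.mem_image.mp hy
    rw [lfun_rho]
    have : we e'.1 - we e'.2 ≤ 2 := by
      simp only [hwe]
      split_ifs <;> omega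
    exact_mod_cast this
  have huniq : ∀ y ∈ A.image rho, lfun we y = 2 → y = rho e := by
    intro y hy hy2
    obtain ⟨e', he', rfl⟩ := Finset.mem_image.mp hy
    rw [lfun_rho] at hy2
    have h2 : we e'.1 - we e'.2 = 2 := by exact_mod_cast hy2
    have hne' := arrow_fst_ne_snd A h he'
    have : e' = e := by
      have h1 : e'.1 = e.1 ∧ e'.2 = e.2 := by
        simp only [hwe] at h2
        split_ifs at h2 <;> simp_all <;> omega
      exact Prod.ext h1.1 h1.2
    rw [this]
  have hPmax : ∀ x ∈ polyG A, lfun we x ≤ 2 := by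
    intro x hx
    rw [poly_eq_hull] at hx
    exact hull_le hbound hx
  have hPuniq : ∀ x ∈ polyG A, lfun we x = 2 → x = rho e := by
    intro x hx hx2
    rw [poly_eq_hull] at hx
    have := hull_concentrate hbound hx hx2
    have hsub : ((A.image rho).filter (fun y => lfun we y = 2) : Set (Fin d → ℝ)) ⊆ {rho e} := by
      intro y hy
      simp only [Finset.coe_filter, Set.mem_setOf_eq] at hy
      exact huniq y hy.1 hy.2
    have := convexHull_min hsub (convex_singleton _) this
    exact this
  rw [mem_extremePoints]
  refine ⟨rho_mem_polyG A he, ?_⟩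
  intro x1 hx1 x2 hx2 hseg
  obtain ⟨a, b, ha, hb, hab, hsum⟩ := hseg
  have hg : a * lfun we x1 + b * lfun we x2 = 2 := by
    rw [← hval2, ← hsum]
    simp [smul_eq_mul]
  have h1 := hPmax x1 hx1
  have h2 := hPmax x2 hx2
  have hx1e : lfun we x1 = 2 := by nlinarith
  have hx2e : lfun we x2 = 2 := by nlinarith
  exact ⟨hPuniq x1 hx1 hx1e, hPuniq x2 hx2 hx2e⟩

end Geom2

section Dim
variable {d : ℕ}

lemma rho_self (i : Fin d) : rho (i,i) = 0 := by funext k; simp [rho]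

lemma rho_add (i b c : Fin d) : rho (i,c) = rho (i,b) + rho (b,c) := by
  funext k; simp [rho]

lemma rho_neg (i j : Fin d) : rho (j,i) = - rho (i,j) := by
  funext k; simp [rho]

lemma reach_rho_mem {r : Fin d → Fin d → Prop} {U : Submodule ℝ (Fin d → ℝ)}
    (hstep : ∀ i j, r i j → rho (i,j) ∈ U) {i j : Fin d}
    (hr : Relation.ReflTransGen r i j) : rho (i,j) ∈ U := by
  induction hr with
  | refl => rw [rho_self]; exact zero_mem U
  | @tail b c hab hbc ih =>
      rw [rho_add i b c]
      exact add_mem ih (hstep _ _ hbc)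

lemma ker_sum_le {U : Submodule ℝ (Fin d → ℝ)} (hall : ∀ i j : Fin d, rho (i,j) ∈ U)
    (i0 : Fin d) {x : Fin d → ℝ} (hx : ∑ i, x i = 0) : x ∈ U := by
  have hrep : x = ∑ i, x i • rho (i, i0) := by
    funext k
    rw [Finset.sum_apply]
    have hterm : ∀ i : Fin d, (x i • rho (i, i0)) k
        = (if k = i then x i else 0) - (if k = i0 then x i else 0) := by
      intro i; simp [rho, mul_sub]
    rw [Finset.sum_congr rfl (fun i _ => hterm i), Finset.sum_sub_distrib]
    have h1 : ∑ i, (if k = i then x i else 0) = x k := by simp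
    have h2 : ∑ i : Fin d, (if k = i0 then x i else 0) = 0 := by
      by_cases hk : k = i0 <;> simp [hk, hx]
    rw [h1, h2, sub_zero]
  rw [hrep]
  exact Submodule.sum_mem U (fun i _ => Submodule.smul_mem U _ (hall i i0))

lemma lfun_one_apply (x : Fin d → ℝ) : lfun (fun _ => (1:ℤ)) x = ∑ i, x i := by
  rw [lfun_apply]; simp

lemma finrank_ker_sum (hd : 0 < d) :
    Module.finrank ℝ (LinearMap.ker (lfun (fun _ : Fin d => (1:ℤ)))) + 1 = d := by
  have hsurj : Function.Surjective (lfun (fun _ : Fin d => (1:ℤ))) := by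
    intro c
    refine ⟨fun _ => c / d, ?_⟩
    rw [lfun_one_apply]
    rw [Finset.sum_const, Finset.card_univ, Fintype.card_fin, nsmul_eq_mul]
    field_simp
  have := LinearMap.finrank_range_add_finrank_ker (lfun (fun _ : Fin d => (1:ℤ)))
  rw [LinearMap.range_eq_top.mpr hsurj, finrank_top] at this
  simp only [Module.finrank_self] at this
  rw [Module.finrank_pi] at this
  simp only [Fintype.card_fin] at this
  omega

lemma lfun_single (w : Fin d → ℤ) (j : Fin d) : lfun w (Pi.single j 1) = (w j : ℝ) := by
  rw [lfun_apply]
  simp [Pi.single_apply, mul_ite, Finset.sum_ite_eq']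

lemma finrank_ker_pair (w : Fin d → ℤ) (i0 j0 : Fin d) (hw : w i0 = w j0 + 1) :
    Module.finrank ℝ
      ↥(LinearMap.ker (lfun (fun _ : Fin d => (1:ℤ))) ⊓ LinearMap.ker (lfun w)) + 2 = d := by
  set g := (lfun (fun _ : Fin d => (1:ℤ))).prod (lfun w) with hg
  have hker : LinearMap.ker g
      = LinearMap.ker (lfun (fun _ : Fin d => (1:ℤ))) ⊓ LinearMap.ker (lfun w) :=
    LinearMap.ker_prod _ _
  have hsurj : Function.Surjective g := by
    rintro ⟨a, b⟩
    set β := b - a * (w j0 : ℝ) with hβ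
    set x : Fin d → ℝ :=
      (a - β) • (Pi.single j0 1 : Fin d → ℝ) + β • (Pi.single i0 1 : Fin d → ℝ) with hxd
    refine ⟨x, ?_⟩
    have h1 : (w i0 : ℝ) = (w j0 : ℝ) + 1 := by exact_mod_cast hw
    have hsum : lfun (fun _ : Fin d => (1:ℤ)) x = a := by
      rw [hxd, map_add, map_smul, map_smul, lfun_single, lfun_single]
      rw [smul_eq_mul, smul_eq_mul]
      push_cast
      ring
    have hwx : lfun w x = b := by
      rw [hxd, map_add, map_smul, map_smul, lfun_single, lfun_single]
      rw [smul_eq_mul, smul_eq_mul, h1]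
      ring
    show (lfun (fun _ : Fin d => (1:ℤ)) x, lfun w x) = (a, b)
    rw [hsum, hwx]
  have h2 := LinearMap.finrank_range_add_finrank_ker g
  rw [LinearMap.range_eq_top.mpr hsurj, finrank_top, hker] at h2
  rw [Module.finrank_pi] at h2
  have h3 : Module.finrank ℝ (ℝ × ℝ) = 2 := by
    rw [Module.finrank_prod]
    simp
  rw [h3] at h2
  simp only [Fintype.card_fin] at h2
  omega

end Dim

section Main
variable {d : ℕ} (A : Finset (Fin d × Fin d))

lemma vectorSpan_le_of {s : Set (Fin d → ℝ)} {U : Submodule ℝ (Fin d → ℝ)}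
    (hsub : ∀ x ∈ s, ∀ y ∈ s, x - y ∈ U) : vectorSpan ℝ s ≤ U := by
  rw [vectorSpan_def, Submodule.span_le]
  intro z hz
  obtain ⟨x, hx, y, hy, rfl⟩ := Set.mem_vsub.mp hz
  exact hsub x hx y hy

lemma rho_inj (h : EveryArrowInDirCycle A) :
    ∀ e ∈ A, ∀ e' ∈ A, rho e = rho e' → e = e' := by
  intro e he e' he' heq
  have hne := arrow_fst_ne_snd A h he
  have h1 : rho e e.1 = rho e' e.1 := congrFun heq e.1
  have h2 : rho e e.2 = rho e' e.2 := congrFun heq e.2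
  simp only [rho] at h1 h2
  simp only [if_true] at h1 h2
  rw [if_neg hne] at h1
  rw [if_neg (Ne.symm hne)] at h2
  have he1 : e.1 = e'.1 := by
    by_contra hc
    rw [if_neg hc] at h1
    split_ifs at h1 <;> norm_num at h1
  have he2 : e.2 = e'.2 := by
    by_contra hc
    rw [if_neg hc] at h2
    split_ifs at h2 <;> norm_num at h2
  exact Prod.ext he1 he2

lemma extreme_restrict {F P : Set (Fin d → ℝ)} (hFP : F ⊆ P) {x : Fin d → ℝ}
    (hx : x ∈ Set.extremePoints ℝ P) (hxF : x ∈ F) : x ∈ Set.extremePoints ℝ F := by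
  rw [mem_extremePoints] at hx ⊢
  exact ⟨hxF, fun x1 h1 x2 h2 hseg => hx.2 x1 (hFP h1) x2 (hFP h2) hseg⟩

lemma main_facet (hconn : GConnected A) (h : EveryArrowInDirCycle A)
    (C : PreCycle (Fin d)) (hC : C.IsCycleIn A) (μ : Fin C.l → ℤ) (hμ : C.IsMu μ)
    (hineq : ∀ a b : Fin C.l, ∀ n : ℕ, HasDPath A (C.v a) (C.v b) n → μ a - μ b ≤ (n : ℤ)) :
    ∃ F : Set (Fin d → ℝ), IsExposed ℝ (polyG A) F ∧ F.Nonempty ∧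
      Module.finrank ℝ (vectorSpan ℝ F) + 1 = Module.finrank ℝ (vectorSpan ℝ (polyG A)) ∧
      F ≠ polyG A ∧ ∀ j, rho (C.arrow j) ∈ F := by
  classical
  obtain ⟨w0, hw0le, hw0cyc⟩ := exists_w0 A C hconn h μ hμ hineq
  obtain ⟨w, hwle, hsubT, hcon⟩ := exists_w_con A hconn h w0 hw0le
  set j00 : Fin C.l := ⟨0, C.pos⟩ with hj00
  have hcycT : ∀ j, (C.arrow j) ∈ Tset A w := by
    intro j
    apply hsubT
    rw [Tset, Finset.mem_filter]
    exact ⟨hC.1 j, hw0cyc j⟩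
  have hwt : ∀ j, w (C.arrow j).1 - w (C.arrow j).2 = 1 := by
    intro j
    have := hcycT j
    rw [Tset, Finset.mem_filter] at this
    exact this.2
  set f := LinearMap.toContinuousLinearMap (lfun w) with hf
  have hfapp : ∀ x, f x = lfun w x := fun x => by rw [hf]; simp
  set F : Set (Fin d → ℝ) := {x ∈ polyG A | ∀ y ∈ polyG A, f y ≤ f x} with hF
  have hb1 : ∀ y ∈ A.image rho, lfun w y ≤ 1 := by
    intro y hy
    obtain ⟨e', he', rfl⟩ := Finset.mem_image.mp hy
    rw [lfun_rho]
    exact_mod_cast hwle e' he'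
  have hmax : ∀ y ∈ polyG A, lfun w y ≤ 1 := by
    intro y hy; rw [poly_eq_hull] at hy; exact hull_le hb1 hy
  have hTsub : Tset A w ⊆ A := Finset.filter_subset _ _
  have htight : ∀ e ∈ Tset A w, lfun w (rho e) = 1 := by
    intro e he
    rw [lfun_rho]
    rw [Tset, Finset.mem_filter] at he
    exact_mod_cast he.2
  have hmemF : ∀ e ∈ Tset A w, rho e ∈ F := by
    intro e he
    refine ⟨rho_mem_polyG A (hTsub he), fun y hy => ?_⟩
    rw [hfapp, hfapp, htight e he]
    exact hmax y hy
  have hmemFc : ∀ j, rho (C.arrow j) ∈ F := fun j => hmemF _ (hcycT j)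
  have hFeq1 : ∀ x ∈ F, lfun w x = 1 := by
    intro x hx
    refine le_antisymm (hmax x hx.1) ?_
    have h0 := hx.2 (rho (C.arrow j00)) (rho_mem_polyG A (hC.1 _))
    rw [hfapp, hfapp, htight _ (hcycT j00)] at h0
    exact h0
  have hneg : ∀ x : Fin d → ℝ, lfun (fun _ : Fin d => (-1:ℤ)) x
      = - lfun (fun _ : Fin d => (1:ℤ)) x := by
    intro x
    rw [lfun_apply, lfun_apply, ← Finset.sum_neg_distrib]
    push_cast
    apply Finset.sum_congr rfl
    intro i _
    ring
  have hFsum : ∀ x ∈ polyG A, lfun (fun _ : Fin d => (1:ℤ)) x = 0 := by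
    intro x hx
    rw [poly_eq_hull] at hx
    have hb : ∀ y ∈ A.image rho, lfun (fun _ : Fin d => (1:ℤ)) y ≤ 0 := by
      intro y hy
      obtain ⟨e', he', rfl⟩ := Finset.mem_image.mp hy
      rw [lfun_rho]; norm_num
    have hb' : ∀ y ∈ A.image rho, lfun (fun _ : Fin d => (-1:ℤ)) y ≤ 0 := by
      intro y hy
      obtain ⟨e', he', rfl⟩ := Finset.mem_image.mp hy
      rw [lfun_rho]; norm_num
    have h1 := hull_le hb hx
    have h2 := hull_le hb' hx
    rw [hneg] at h2
    linarith
  set Kpair := LinearMap.ker (lfun (fun _ : Fin d => (1:ℤ))) ⊓ LinearMap.ker (lfun w) with hKp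
  have hFup : vectorSpan ℝ F ≤ Kpair := by
    apply vectorSpan_le_of
    intro x hx y hy
    rw [hKp, Submodule.mem_inf]
    constructor
    · rw [LinearMap.mem_ker, map_sub, hFsum x hx.1, hFsum y hy.1, sub_zero]
    · rw [LinearMap.mem_ker, map_sub, hFeq1 x hx, hFeq1 y hy, sub_self]
  set e0 := C.arrow j00 with he0
  set U := vectorSpan ℝ F ⊔ Submodule.span ℝ {rho e0} with hU
  have hTU : ∀ e ∈ Tset A w, rho e ∈ U := by
    intro e he
    have hd1 : rho e - rho e0 ∈ vectorSpan ℝ F :=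
      vsub_mem_vectorSpan ℝ (hmemF e he) (hmemF e0 (hcycT j00))
    have : rho e = (rho e - rho e0) + rho e0 := by ring
    rw [this]
    exact Submodule.add_mem U (Submodule.mem_sup_left hd1)
      (Submodule.mem_sup_right (Submodule.subset_span rfl))
  have hstepU : ∀ i j, TStep A w i j → rho (i,j) ∈ U := by
    intro i j hstep
    rcases hstep with ⟨hmem, htt⟩ | ⟨hmem, htt⟩
    · exact hTU _ (by rw [Tset, Finset.mem_filter]; exact ⟨hmem, htt⟩)
    · have : rho (i,j) = - rho (j,i) := by rw [rho_neg]
      rw [this]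
      exact Submodule.neg_mem U (hTU _ (by rw [Tset, Finset.mem_filter]; exact ⟨hmem, htt⟩))
  have hallU : ∀ i j : Fin d, rho (i,j) ∈ U := fun i j => reach_rho_mem hstepU (hcon i j)
  have hkerU : LinearMap.ker (lfun (fun _ : Fin d => (1:ℤ))) ≤ U := by
    intro x hx
    rw [LinearMap.mem_ker, lfun_one_apply] at hx
    exact ker_sum_le hallU (C.v j00) hx
  -- poly span
  have hallP : ∀ i j : Fin d, rho (i,j) ∈ vectorSpan ℝ (polyG A) := by
    intro i j
    refine reach_rho_mem ?_ (scc A hconn h i j)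
    intro a b hab
    have : rho (a,b) = rho (a,b) - 0 := by ring
    rw [this]
    exact vsub_mem_vectorSpan ℝ (rho_mem_polyG A hab) (zero_mem_polyG A h (hC.1 j00))
  have hPspan : vectorSpan ℝ (polyG A) = LinearMap.ker (lfun (fun _ : Fin d => (1:ℤ))) := by
    apply le_antisymm
    · apply vectorSpan_le_of
      intro x hx y hy
      rw [LinearMap.mem_ker, map_sub, hFsum x hx, hFsum y hy, sub_zero]
    · intro x hx
      rw [LinearMap.mem_ker, lfun_one_apply] at hx
      exact ker_sum_le hallP (C.v j00) hx
  have hd : 0 < d := (C.v j00).pos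
  have hk1 := finrank_ker_sum (d := d) hd
  have hk2 : Module.finrank ℝ Kpair + 2 = d := by
    rw [hKp]
    refine finrank_ker_pair w e0.1 e0.2 ?_
    have := hwt j00
    rw [← he0] at this
    omega
  have he0ne : rho e0 ≠ 0 := by
    have hne := arrow_fst_ne_snd A h (hC.1 j00)
    intro hc
    have := congrFun hc e0.1
    simp only [rho, if_pos rfl, if_neg hne] at this
    rw [if_neg (show e0.1 ≠ e0.2 from hne)] at this
    norm_num at this
  have hup : Module.finrank ℝ (vectorSpan ℝ F) ≤ Module.finrank ℝ Kpair :=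
    Submodule.finrank_mono hFup
  have hlow : Module.finrank ℝ (LinearMap.ker (lfun (fun _ : Fin d => (1:ℤ))))
      ≤ Module.finrank ℝ (vectorSpan ℝ F) + 1 := by
    calc Module.finrank ℝ (LinearMap.ker (lfun (fun _ : Fin d => (1:ℤ))))
        ≤ Module.finrank ℝ U := Submodule.finrank_mono hkerU
      _ ≤ Module.finrank ℝ (vectorSpan ℝ F)
            + Module.finrank ℝ (Submodule.span ℝ {rho e0}) :=
          Submodule.finrank_add_le_finrank_add_finrank _ _
      _ = Module.finrank ℝ (vectorSpan ℝ F) + 1 := by rw [finrank_span_singleton he0ne]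
  have hdimF : Module.finrank ℝ (vectorSpan ℝ F) + 1
      = Module.finrank ℝ (vectorSpan ℝ (polyG A)) := by
    rw [hPspan]
    omega
  refine ⟨F, fun _ => ⟨f, hF⟩, ⟨rho e0, hmemFc j00⟩, hdimF, ?_, hmemFc⟩
  intro heq
  have := congrArg (fun s => Module.finrank ℝ (vectorSpan ℝ s)) heq
  omega

end Main

/-- if `G` has a homogeneous cycle `C` with
`μ_C(i_a) - μ_C(i_b) ≤ dist_G(i_a, i_b)` for all `a, b` (equivalently,
`μ_C(i_a) - μ_C(i_b) ≤ n` for every directed path of length `n` from `i_a` to `i_b`),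
then the `l` points `ρ(e_1), …, ρ(e_l)` of `C` are affinely dependent, they lie on a
common proper face of `P_G`, and `P_G` is not simplicial. -/
theorem stmt7 {d : ℕ} (A : Finset (Fin d × Fin d)) (hconn : GConnected A)
    (h : EveryArrowInDirCycle A) (C : PreCycle (Fin d)) (hC : C.IsCycleIn A)
    (hhom : C.Homogeneous) (μ : Fin C.l → ℤ) (hμ : C.IsMu μ)
    (hineq : ∀ a b : Fin C.l, ∀ n : ℕ, HasDPath A (C.v a) (C.v b) n → μ a - μ b ≤ (n : ℤ)) :
    (¬ AffineIndependent ℝ (fun j : Fin C.l => rho (C.arrow j))) ∧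
    (∃ F : Set (Fin d → ℝ), IsExposed ℝ (polyG A) F ∧ F.Nonempty ∧ F ≠ polyG A ∧
      ∀ j, rho (C.arrow j) ∈ F) ∧
    ¬ Simplicial (polyG A) := by
  classical
  obtain ⟨F, hexp, hne, hdim, hneq, hmem⟩ := main_facet A hconn h C hC μ hμ hineq
  refine ⟨not_affInd C hhom, ⟨F, hexp, hne, hneq, hmem⟩, ?_⟩
  intro hsimp
  have hfacet : IsFacetOf F (polyG A) := ⟨hexp, hne, hdim⟩
  have hAI := hsimp F hfacet
  have hFP : F ⊆ polyG A := hexp.subset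
  have hext : ∀ j, rho (C.arrow j) ∈ Set.extremePoints ℝ F := fun j =>
    extreme_restrict hFP (rho_extreme A h (hC.1 j)) (hmem j)
  have hinj : Function.Injective
      (fun j : Fin C.l => (⟨rho (C.arrow j), hext j⟩ : F.extremePoints ℝ)) := by
    intro a b hab
    have hval : rho (C.arrow a) = rho (C.arrow b) := congrArg Subtype.val hab
    exact hC.2 (rho_inj A h _ (hC.1 a) _ (hC.1 b) hval)
  have hcontra := hAI.comp_embedding
    (⟨fun j : Fin C.l => (⟨rho (C.arrow j), hext j⟩ : F.extremePoints ℝ), hinj⟩ :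
      Fin C.l ↪ (F.extremePoints ℝ))
  exact not_affInd C hhom hcontra
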